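/- arXiv:1709.03473 — 4 statements merged into one kernel-verified Lean document; each statement's English description precedes it below -/
import Mathlib

section
/- Let E and F be real Hilbert spaces and let A, Â : E → F be bounded operators. Then for every s ∈ (0, 1/2): ‖(Â*Â)^s − (A*A)^s‖ ≤ (sin(sπ)/π) · (1/s + 1/(1/2 − s)) · ‖Â − A‖^{2s}. -/
open ContinuousLinearMap

/-- Balakrishnan's integral formula for the fractional power `T ^ s`, `s ∈ (0,1)`, of a
positive self-adjoint operator `T`; it agrees with the power given by the continuous
functional calculus. -/
noncomputable def fracPow {E : Type*} [NormedAddCommGroup E] [NormedSpace ℝ E]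
    [CompleteSpace E] (T : E →L[ℝ] E) (s : ℝ) : E →L[ℝ] E :=
  (Real.sin (s * Real.pi) / Real.pi) •
    ∫ t in Set.Ioi (0 : ℝ), t ^ (s - 1) •
      ((Ring.inverse (t • (1 : E →L[ℝ] E) + T)) ∘L T)

/-- The real power `T ^ r` (`r ≥ 0`) of a positive self-adjoint operator `T`; for positive
self-adjoint `T` it agrees with the power defined by the continuous functional calculus. -/
noncomputable def opPow {E : Type*} [NormedAddCommGroup E] [NormedSpace ℝ E]
    [CompleteSpace E] (T : E →L[ℝ] E) (r : ℝ) : E →L[ℝ] E :=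
  if r = (⌊r⌋₊ : ℝ) then T ^ ⌊r⌋₊ else (T ^ ⌊r⌋₊) ∘L fracPow T (r - ⌊r⌋₊)

open MeasureTheory Real Set
open scoped RealInnerProductSpace NNReal

namespace Stmt4Aux
variable {E F : Type*} [NormedAddCommGroup E] [InnerProductSpace ℝ E] [CompleteSpace E]
  [NormedAddCommGroup F] [InnerProductSpace ℝ F] [CompleteSpace F]

noncomputable def opB (A : E →L[ℝ] F) (t : ℝ) : E →L[ℝ] E :=
  t • (1 : E →L[ℝ] E) + adjoint A ∘L A

noncomputable def opR (A : E →L[ℝ] F) (t : ℝ) : E →L[ℝ] E := Ring.inverse (opB A t)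

lemma inner_opB (A : E →L[ℝ] F) (t : ℝ) (x : E) :
    ⟪opB A t x, x⟫ = t * ‖x‖ ^ 2 + ‖A x‖ ^ 2 := by
  simp only [opB, add_apply, smul_apply, ContinuousLinearMap.one_apply, comp_apply, inner_add_left,
    real_inner_smul_left, adjoint_inner_left]
  rw [real_inner_self_eq_norm_sq, real_inner_self_eq_norm_sq]

lemma opB_selfAdjoint (A : E →L[ℝ] F) (t : ℝ) : IsSelfAdjoint (opB A t) := by
  rw [isSelfAdjoint_iff']
  have h1 : adjoint (1 : E →L[ℝ] E) = 1 := adjoint_id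
  simp [opB, map_add, _root_.map_smul, adjoint_comp, adjoint_adjoint, h1]

lemma norm_le_opB (A : E →L[ℝ] F) {t : ℝ} (ht : 0 < t) (x : E) :
    t * ‖x‖ ≤ ‖opB A t x‖ := by
  rcases eq_or_ne x 0 with rfl | hx
  · simp
  · have h1 : t * ‖x‖ ^ 2 ≤ ⟪opB A t x, x⟫ := by
      rw [inner_opB]; nlinarith [sq_nonneg ‖A x‖]
    have h2 : ⟪opB A t x, x⟫ ≤ ‖opB A t x‖ * ‖x‖ := real_inner_le_norm _ _
    have hx' : 0 < ‖x‖ := norm_pos_iff.mpr hx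
    nlinarith

lemma isUnit_opB (A : E →L[ℝ] F) {t : ℝ} (ht : 0 < t) : IsUnit (opB A t) := by
  set B := opB A t
  have halip : AntilipschitzWith (⟨t⁻¹, by positivity⟩ : ℝ≥0) B := by
    apply ContinuousLinearMap.antilipschitz_of_bound
    intro x
    show ‖x‖ ≤ t⁻¹ * ‖B x‖
    have h := norm_le_opB A ht x
    calc ‖x‖ = t⁻¹ * (t * ‖x‖) := by field_simp
    _ ≤ t⁻¹ * ‖B x‖ := by
        apply mul_le_mul_of_nonneg_left h (by positivity)
  have hker : LinearMap.ker (B : E →ₗ[ℝ] E) = ⊥ := by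
    rw [Submodule.eq_bot_iff]
    intro x hx
    rw [LinearMap.mem_ker] at hx
    exact halip.injective (by simpa using hx)
  have hclosed : IsClosed (Set.range B) := halip.isClosed_range B.uniformContinuous
  have hrange : LinearMap.range (B : E →ₗ[ℝ] E) = ⊤ := by
    have hc : (LinearMap.range (B : E →ₗ[ℝ] E) : Submodule ℝ E).topologicalClosure = LinearMap.range (B : E →ₗ[ℝ] E) :=
      IsClosed.submodule_topologicalClosure_eq hclosed
    rw [← hc, ← Submodule.orthogonal_orthogonal_eq_closure]
    have horth : (LinearMap.range (B : E →ₗ[ℝ] E))ᗮ = ⊥ := by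
      rw [Submodule.eq_bot_iff]
      intro y hy
      have h0 : ⟪B y, y⟫ = 0 := by
        exact hy (B y) (LinearMap.mem_range_self _ y)
      have h1 : t * ‖y‖ ^ 2 + ‖A y‖ ^ 2 = 0 := by rw [← inner_opB]; exact h0
      have h3 : ‖y‖ ^ 2 ≤ 0 := by by_contra h; push_neg at h; nlinarith [sq_nonneg ‖A y‖]
      have h4 : ‖y‖ ^ 2 = 0 := le_antisymm h3 (sq_nonneg _)
      have h5 : ‖y‖ = 0 := by
        have := sq_eq_zero_iff.mp h4
        exact this
      simpa using h5
    rw [horth, Submodule.bot_orthogonal_eq_top]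
  let e := ContinuousLinearEquiv.ofBijective B hker hrange
  refine ⟨⟨B, (e.symm : E →L[ℝ] E), ?_, ?_⟩, rfl⟩
  · ext x; exact e.apply_symm_apply x
  · ext x; exact e.symm_apply_apply x

lemma opB_comp_opR (A : E →L[ℝ] F) {t : ℝ} (ht : 0 < t) : opB A t ∘L opR A t = 1 := by
  rw [← mul_def]; exact Ring.mul_inverse_cancel _ (isUnit_opB A ht)

lemma opR_comp_opB (A : E →L[ℝ] F) {t : ℝ} (ht : 0 < t) : opR A t ∘L opB A t = 1 := by
  rw [← mul_def]; exact Ring.inverse_mul_cancel _ (isUnit_opB A ht)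

lemma opB_opR_apply (A : E →L[ℝ] F) {t : ℝ} (ht : 0 < t) (y : E) :
    opB A t (opR A t y) = y := by
  have := congrArg (fun f => f y) (opB_comp_opR A ht)
  simpa using this

lemma opR_selfAdjoint (A : E →L[ℝ] F) (t : ℝ) : IsSelfAdjoint (opR A t) := by
  have h := opB_selfAdjoint A t
  unfold IsSelfAdjoint at h ⊢
  rw [opR, ← Ring.inverse_star, h]

lemma norm_opR_apply (A : E →L[ℝ] F) {t : ℝ} (ht : 0 < t) (y : E) :
    ‖opR A t y‖ ≤ t⁻¹ * ‖y‖ := by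
  have h := norm_le_opB A ht (opR A t y)
  rw [opB_opR_apply A ht] at h
  calc ‖opR A t y‖ = t⁻¹ * (t * ‖opR A t y‖) := by field_simp
  _ ≤ t⁻¹ * ‖y‖ := mul_le_mul_of_nonneg_left h (by positivity)

lemma norm_opR (A : E →L[ℝ] F) {t : ℝ} (ht : 0 < t) : ‖opR A t‖ ≤ t⁻¹ :=
  opNorm_le_bound _ (by positivity) (norm_opR_apply A ht)

lemma inner_opR_nonneg (A : E →L[ℝ] F) {t : ℝ} (ht : 0 < t) (y : E) :
    0 ≤ ⟪opR A t y, y⟫ := by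
  have h : ⟪opR A t y, y⟫ = t * ‖opR A t y‖ ^ 2 + ‖A (opR A t y)‖ ^ 2 := by
    rw [← inner_opB A t (opR A t y), real_inner_comm]
    rw [opB_opR_apply A ht]
  rw [h]; positivity

lemma inner_opR_le (A : E →L[ℝ] F) {t : ℝ} (ht : 0 < t) (y : E) :
    ⟪opR A t y, y⟫ ≤ t⁻¹ * ‖y‖ ^ 2 := by
  calc ⟪opR A t y, y⟫ ≤ ‖opR A t y‖ * ‖y‖ := real_inner_le_norm _ _
  _ ≤ (t⁻¹ * ‖y‖) * ‖y‖ := mul_le_mul_of_nonneg_right (norm_opR_apply A ht y) (norm_nonneg _)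
  _ = t⁻¹ * ‖y‖ ^ 2 := by ring

lemma norm_comp_opR (A : E →L[ℝ] F) {t : ℝ} (ht : 0 < t) :
    ‖A ∘L opR A t‖ ≤ (2 * Real.sqrt t)⁻¹ := by
  have hst : 0 < Real.sqrt t := Real.sqrt_pos.mpr ht
  apply opNorm_le_bound _ (by positivity)
  intro y
  set z := opR A t y with hz
  have hy : y = t • z + adjoint A (A z) := by
    conv_lhs => rw [← opB_opR_apply A ht y]
    simp [opB]
    rfl
  have hAz : ‖A z‖ ^ 2 = ⟪adjoint A (A z), z⟫ := by
    rw [adjoint_inner_left, real_inner_self_eq_norm_sq]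
  have hCS : ⟪adjoint A (A z), z⟫ ≤ ‖adjoint A (A z)‖ * ‖z‖ := real_inner_le_norm _ _
  have hexp : ‖y‖ ^ 2 = t ^ 2 * ‖z‖ ^ 2 + 2 * t * ‖A z‖ ^ 2 + ‖adjoint A (A z)‖ ^ 2 := by
    rw [hy, norm_add_sq_real, norm_smul, real_inner_smul_left, ← real_inner_comm z, ← hAz]
    simp [abs_of_pos ht]
    ring
  have hkey : 4 * t * ‖A z‖ ^ 2 ≤ ‖y‖ ^ 2 := by
    nlinarith [sq_nonneg (t * ‖z‖ - ‖adjoint A (A z)‖), hAz, hCS, norm_nonneg z,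
      norm_nonneg (adjoint A (A z)), sq_nonneg (‖A z‖)]
  have hss : Real.sqrt t ^ 2 = t := Real.sq_sqrt ht.le
  have h4 : ((2 * Real.sqrt t)⁻¹ * ‖y‖) ^ 2 = (4 * t)⁻¹ * ‖y‖ ^ 2 := by
    have h2s : (2 * Real.sqrt t) ^ 2 = 4 * t := by rw [mul_pow, hss]; ring
    rw [mul_pow, inv_pow, h2s]
  have h5 : ‖(A ∘L opR A t) y‖ ^ 2 ≤ ((2 * Real.sqrt t)⁻¹ * ‖y‖) ^ 2 := by
    rw [h4]
    simp only [comp_apply, ← hz]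
    rw [inv_mul_eq_div, le_div_iff₀ (by positivity)]
    nlinarith [hkey]
  have h6 : (0:ℝ) ≤ (2 * Real.sqrt t)⁻¹ * ‖y‖ := by positivity
  nlinarith [norm_nonneg ((A ∘L opR A t) y), h5, h6]

lemma norm_opR_comp_adjoint (A : E →L[ℝ] F) {t : ℝ} (ht : 0 < t) :
    ‖opR A t ∘L adjoint A‖ ≤ (2 * Real.sqrt t)⁻¹ := by
  have h : opR A t ∘L adjoint A = adjoint (A ∘L opR A t) := by
    rw [adjoint_comp, (opR_selfAdjoint A t).adjoint_eq]
  rw [h, LinearIsometryEquiv.norm_map adjoint]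
  exact norm_comp_opR A ht

/-- Norm bound for self-adjoint operators via the quadratic form. -/
lemma norm_le_of_inner {C : E →L[ℝ] E} (hC : IsSelfAdjoint C) {M : ℝ} (hM : 0 ≤ M)
    (h : ∀ x, |⟪C x, x⟫| ≤ M * ‖x‖ ^ 2) : ‖C‖ ≤ M := by
  have hsym := isSelfAdjoint_iff_isSymmetric.mp hC
  have key : ∀ x y : E, ⟪C x, y⟫ ≤ M / 2 * (‖x‖ ^ 2 + ‖y‖ ^ 2) := by
    intro x y
    have hyx : ⟪C y, x⟫ = ⟪C x, y⟫ := (hsym y x).trans (real_inner_comm _ _)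
    have pol : 4 * ⟪C x, y⟫ = ⟪C (x + y), x + y⟫ - ⟪C (x - y), x - y⟫ := by
      simp only [map_add, map_sub, inner_add_left, inner_add_right, inner_sub_left,
        inner_sub_right]
      linarith [hyx]
    have hpar : ‖x + y‖ ^ 2 + ‖x - y‖ ^ 2 = 2 * (‖x‖ ^ 2 + ‖y‖ ^ 2) := by
      have := parallelogram_law_with_norm ℝ x y; nlinarith [this]
    have b1 := abs_le.mp (h (x + y))
    have b2 := abs_le.mp (h (x - y))
    nlinarith [b1.1, b1.2, b2.1, b2.2]
  refine opNorm_le_bound _ hM fun x => ?_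
  rcases eq_or_ne (C x) 0 with h0 | h0
  · rw [h0]; simp; positivity
  · have hCx : 0 < ‖C x‖ := norm_pos_iff.mpr h0
    have hx : x ≠ 0 := by rintro rfl; simp at h0
    have hxn : 0 < ‖x‖ := norm_pos_iff.mpr hx
    have h1 : ⟪C x, (‖x‖ / ‖C x‖) • C x⟫ = ‖x‖ * ‖C x‖ := by
      rw [real_inner_smul_right, real_inner_self_eq_norm_sq]
      field_simp
    have h2 : ‖(‖x‖ / ‖C x‖) • C x‖ = ‖x‖ := by
      rw [norm_smul, Real.norm_eq_abs, abs_of_pos (by positivity)]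
      field_simp
    have hk := key x ((‖x‖ / ‖C x‖) • C x)
    rw [h1, h2] at hk
    nlinarith [hk, hxn, hCx]

lemma opR_comp_T (A : E →L[ℝ] F) {t : ℝ} (ht : 0 < t) :
    opR A t ∘L (adjoint A ∘L A) = 1 - t • opR A t := by
  have h := opR_comp_opB A ht
  rw [← mul_def] at h
  rw [opB, mul_add, mul_smul_comm, mul_one] at h
  rw [← mul_def, eq_sub_iff_add_eq, add_comm]
  exact h

/-- Resolvent difference identity. -/
lemma opR_sub (A Ahat : E →L[ℝ] F) {t : ℝ} (ht : 0 < t) :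
    opR A t - opR Ahat t = opR Ahat t * (opB Ahat t - opB A t) * opR A t := by
  have e1 : opR Ahat t * opB Ahat t = 1 := by rw [mul_def]; exact opR_comp_opB Ahat ht
  have e2 : opB A t * opR A t = 1 := by rw [mul_def]; exact opB_comp_opR A ht
  calc opR A t - opR Ahat t
      = (opR Ahat t * opB Ahat t) * opR A t - opR Ahat t * (opB A t * opR A t) := by
        rw [e1, e2, one_mul, mul_one]
    _ = opR Ahat t * (opB Ahat t - opB A t) * opR A t := by noncomm_ring

lemma opB_sub (A Ahat : E →L[ℝ] F) (t : ℝ) :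
    opB Ahat t - opB A t =
      (adjoint Ahat ∘L (Ahat - A)) + (adjoint (Ahat - A) ∘L A) := by
  have hadj : adjoint (Ahat - A) = adjoint Ahat - adjoint A := map_sub _ _ _
  rw [hadj, opB, opB, comp_sub, sub_comp]
  abel

lemma normD_le_one (A Ahat : E →L[ℝ] F) {t : ℝ} (ht : 0 < t) :
    ‖(opR Ahat t ∘L (adjoint Ahat ∘L Ahat)) - (opR A t ∘L (adjoint A ∘L A))‖ ≤ 1 := by
  rw [opR_comp_T Ahat ht, opR_comp_T A ht]
  have hid : (1 - t • opR Ahat t) - (1 - t • opR A t) = t • opR A t - t • opR Ahat t := by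
    abel
  rw [hid]
  have hsa : IsSelfAdjoint (t • opR A t - t • opR Ahat t) := by
    have h1 := opR_selfAdjoint A t
    have h2 := opR_selfAdjoint Ahat t
    unfold IsSelfAdjoint at h1 h2 ⊢
    rw [star_sub, star_smul, star_smul, h1, h2, star_trivial]
  refine norm_le_of_inner hsa zero_le_one fun x => ?_
  have e1 : t * (t⁻¹ * ‖x‖ ^ 2) = ‖x‖ ^ 2 := by field_simp
  have l1 := inner_opR_nonneg A ht x
  have l2 := inner_opR_le A ht x
  have l3 := inner_opR_nonneg Ahat ht x
  have l4 := inner_opR_le Ahat ht x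
  simp only [sub_apply, smul_apply, inner_sub_left, real_inner_smul_left, one_mul]
  rw [abs_le]
  constructor
  · nlinarith [mul_le_mul_of_nonneg_left l4 ht.le, mul_nonneg ht.le l1]
  · nlinarith [mul_le_mul_of_nonneg_left l2 ht.le, mul_nonneg ht.le l3]

lemma norm_opR_T_le_one (A : E →L[ℝ] F) {t : ℝ} (ht : 0 < t) :
    ‖opR A t ∘L (adjoint A ∘L A)‖ ≤ 1 := by
  rw [opR_comp_T A ht]
  have hsa : IsSelfAdjoint ((1 : E →L[ℝ] E) - t • opR A t) := by
    have h1 := opR_selfAdjoint A t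
    unfold IsSelfAdjoint at h1 ⊢
    rw [star_sub, star_smul, star_one, h1, star_trivial]
  refine norm_le_of_inner hsa zero_le_one fun x => ?_
  have e1 : t * (t⁻¹ * ‖x‖ ^ 2) = ‖x‖ ^ 2 := by field_simp
  have l1 := inner_opR_nonneg A ht x
  have l2 := inner_opR_le A ht x
  simp only [sub_apply, smul_apply, inner_sub_left, real_inner_smul_left, ContinuousLinearMap.one_apply]
  rw [abs_le, real_inner_self_eq_norm_sq]
  constructor
  · nlinarith [mul_le_mul_of_nonneg_left l2 ht.le]
  · nlinarith [mul_nonneg ht.le l1]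

set_option maxHeartbeats 1000000 in
lemma normD_le_div (A Ahat : E →L[ℝ] F) {t : ℝ} (ht : 0 < t) :
    ‖(opR Ahat t ∘L (adjoint Ahat ∘L Ahat)) - (opR A t ∘L (adjoint A ∘L A))‖ ≤
      ‖Ahat - A‖ / Real.sqrt t := by
  have hst : 0 < Real.sqrt t := Real.sqrt_pos.mpr ht
  have hss : Real.sqrt t ^ 2 = t := Real.sq_sqrt ht.le
  rw [opR_comp_T Ahat ht, opR_comp_T A ht]
  have hid : (1 - t • opR Ahat t) - (1 - t • opR A t) = t • (opR A t - opR Ahat t) := by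
    rw [smul_sub]; abel
  rw [hid, opR_sub A Ahat ht, opB_sub A Ahat t]
  set X := adjoint Ahat ∘L (Ahat - A) with hX
  set Y := adjoint (Ahat - A) ∘L A with hY
  have hsplit : opR Ahat t * (X + Y) * opR A t
      = (opR Ahat t ∘L adjoint Ahat) ∘L ((Ahat - A) ∘L opR A t)
        + opR Ahat t ∘L (adjoint (Ahat - A) ∘L (A ∘L opR A t)) := by
    ext x
    simp [mul_apply, hX, hY, mul_def]
  rw [hsplit]
  have hb1 : ‖(opR Ahat t ∘L adjoint Ahat) ∘L ((Ahat - A) ∘L opR A t)‖ ≤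
      (2 * Real.sqrt t)⁻¹ * (‖Ahat - A‖ * t⁻¹) := by
    calc ‖(opR Ahat t ∘L adjoint Ahat) ∘L ((Ahat - A) ∘L opR A t)‖
        ≤ ‖opR Ahat t ∘L adjoint Ahat‖ * ‖(Ahat - A) ∘L opR A t‖ := opNorm_comp_le _ _
      _ ≤ (2 * Real.sqrt t)⁻¹ * (‖Ahat - A‖ * t⁻¹) := by
          apply mul_le_mul (norm_opR_comp_adjoint Ahat ht)
          · calc ‖(Ahat - A) ∘L opR A t‖ ≤ ‖Ahat - A‖ * ‖opR A t‖ := opNorm_comp_le _ _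
              _ ≤ ‖Ahat - A‖ * t⁻¹ :=
                  mul_le_mul_of_nonneg_left (norm_opR A ht) (norm_nonneg _)
          · positivity
          · positivity
  have hb2 : ‖opR Ahat t ∘L (adjoint (Ahat - A) ∘L (A ∘L opR A t))‖ ≤
      t⁻¹ * (‖Ahat - A‖ * (2 * Real.sqrt t)⁻¹) := by
    calc ‖opR Ahat t ∘L (adjoint (Ahat - A) ∘L (A ∘L opR A t))‖
        ≤ ‖opR Ahat t‖ * ‖adjoint (Ahat - A) ∘L (A ∘L opR A t)‖ := opNorm_comp_le _ _
      _ ≤ t⁻¹ * (‖Ahat - A‖ * (2 * Real.sqrt t)⁻¹) := by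
          apply mul_le_mul (norm_opR Ahat ht)
          · calc ‖adjoint (Ahat - A) ∘L (A ∘L opR A t)‖
                ≤ ‖adjoint (Ahat - A)‖ * ‖A ∘L opR A t‖ := opNorm_comp_le _ _
              _ ≤ ‖Ahat - A‖ * (2 * Real.sqrt t)⁻¹ := by
                  rw [LinearIsometryEquiv.norm_map adjoint]
                  exact mul_le_mul_of_nonneg_left (norm_comp_opR A ht) (norm_nonneg _)
          · positivity
          · positivity
  refine le_trans (opNorm_smul_le t _) ?_
  rw [Real.norm_eq_abs, abs_of_pos ht]
  refine le_trans (mul_le_mul_of_nonneg_left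
    (le_trans (norm_add_le _ _) (add_le_add hb1 hb2)) ht.le) (le_of_eq ?_)
  field_simp
  nlinarith [hss, hst]
/-- the integrand of the Balakrishnan formula -/
noncomputable def bInt (A : E →L[ℝ] F) (s : ℝ) (t : ℝ) : E →L[ℝ] E :=
  t ^ (s - 1) • (opR A t ∘L (adjoint A ∘L A))

lemma continuousOn_opRT (A : E →L[ℝ] F) :
    ContinuousOn (fun t : ℝ => opR A t ∘L (adjoint A ∘L A)) (Ioi (0 : ℝ)) := by
  have h1 : ContinuousOn (fun t : ℝ => opR A t) (Ioi (0 : ℝ)) := by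
    intro t ht
    apply ContinuousAt.continuousWithinAt
    obtain ⟨u, hu⟩ := isUnit_opB A (mem_Ioi.mp ht)
    have hinv : ContinuousAt Ring.inverse (opB A t) := by
      rw [← hu]; exact NormedRing.inverse_continuousAt u
    have hB : Continuous (fun τ : ℝ => opB A τ) := by
      unfold opB
      exact (continuous_id.smul continuous_const).add continuous_const
    exact hinv.comp hB.continuousAt
  exact h1.mul continuousOn_const

lemma continuousOn_bInt (A : E →L[ℝ] F) (s : ℝ) :
    ContinuousOn (bInt A s) (Ioi (0 : ℝ)) := by
  apply ContinuousOn.fun_smul _ (continuousOn_opRT A)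
  intro t ht
  exact (Real.continuousAt_rpow_const t (s - 1)
    (Or.inl (ne_of_gt (mem_Ioi.mp ht)))).continuousWithinAt

set_option synthInstance.maxHeartbeats 400000 in
lemma integrableOn_bInt (A : E →L[ℝ] F) {s : ℝ} (hs0 : 0 < s) (hs1 : s < 1) :
    IntegrableOn (bInt A s) (Ioi (0 : ℝ)) := by
  have hmeas : AEStronglyMeasurable (bInt A s) (volume.restrict (Ioi (0:ℝ))) :=
    (continuousOn_bInt A s).aestronglyMeasurable measurableSet_Ioi
  have hsplit : Ioi (0:ℝ) = Ioc 0 1 ∪ Ioi 1 := (Ioc_union_Ioi_eq_Ioi zero_le_one).symm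
  rw [hsplit]
  apply IntegrableOn.union
  · -- on Ioc 0 1, majorant t ^ (s-1)
    have hmaj : IntegrableOn (fun t : ℝ => t ^ (s - 1)) (Ioc (0:ℝ) 1) := by
      rw [← intervalIntegrable_iff_integrableOn_Ioc_of_le zero_le_one]
      exact intervalIntegral.intervalIntegrable_rpow' (by linarith)
    apply Integrable.mono hmaj
      (hmeas.mono_set (by rw [hsplit]; exact subset_union_left))
    rw [ae_restrict_iff' measurableSet_Ioc]
    filter_upwards with t ht
    have ht0 : 0 < t := ht.1
    have hr : (0:ℝ) ≤ t ^ (s - 1) := Real.rpow_nonneg ht0.le _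
    calc ‖bInt A s t‖ ≤ ‖t ^ (s-1)‖ * ‖opR A t ∘L (adjoint A ∘L A)‖ := opNorm_smul_le _ _
      _ ≤ ‖t ^ (s-1)‖ * 1 :=
          mul_le_mul_of_nonneg_left (norm_opR_T_le_one A ht0) (norm_nonneg _)
      _ = ‖(fun t : ℝ => t ^ (s - 1)) t‖ := by rw [mul_one]
  · -- on Ioi 1, majorant ‖T‖ * t ^ (s-2)
    have hmaj : IntegrableOn (fun t : ℝ => ‖adjoint A ∘L A‖ * t ^ (s - 2)) (Ioi (1:ℝ)) :=
      (integrableOn_Ioi_rpow_of_lt (by linarith) one_pos).const_mul _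
    apply Integrable.mono hmaj
      (hmeas.mono_set (by rw [hsplit]; exact subset_union_right))
    rw [ae_restrict_iff' measurableSet_Ioi]
    filter_upwards with t ht
    have ht1 : 1 < t := mem_Ioi.mp ht
    have ht0 : 0 < t := lt_trans one_pos ht1
    have h2 : t ^ (s - 1) * t⁻¹ = t ^ (s - 2) := by
      rw [← Real.rpow_neg_one t, ← Real.rpow_add ht0]
      congr 1
      ring
    have hRT : ‖opR A t ∘L (adjoint A ∘L A)‖ ≤ t⁻¹ * ‖adjoint A ∘L A‖ := by
      calc ‖opR A t ∘L (adjoint A ∘L A)‖ ≤ ‖opR A t‖ * ‖adjoint A ∘L A‖ := opNorm_comp_le _ _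
        _ ≤ t⁻¹ * ‖adjoint A ∘L A‖ :=
            mul_le_mul_of_nonneg_right (norm_opR A ht0) (norm_nonneg _)
    have hr : (0:ℝ) ≤ t ^ (s - 1) := Real.rpow_nonneg ht0.le _
    calc ‖bInt A s t‖ ≤ ‖t ^ (s-1)‖ * ‖opR A t ∘L (adjoint A ∘L A)‖ := opNorm_smul_le _ _
      _ ≤ t ^ (s-1) * (t⁻¹ * ‖adjoint A ∘L A‖) := by
          rw [Real.norm_eq_abs, abs_of_nonneg hr]
          exact mul_le_mul_of_nonneg_left hRT hr
      _ = ‖adjoint A ∘L A‖ * t ^ (s - 2) := by rw [← mul_assoc, h2]; ring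
      _ ≤ ‖(fun t : ℝ => ‖adjoint A ∘L A‖ * t ^ (s - 2)) t‖ := le_abs_self _

end Stmt4Aux

open Stmt4Aux

/-- Lipschitz-type estimate for small fractional powers `s ∈ (0, 1/2)` of `A*A`. -/
theorem stmt4
    {E F : Type*} [NormedAddCommGroup E] [InnerProductSpace ℝ E] [CompleteSpace E]
    [NormedAddCommGroup F] [InnerProductSpace ℝ F] [CompleteSpace F]
    (A Ahat : E →L[ℝ] F) (s : ℝ) (hs : s ∈ Set.Ioo (0 : ℝ) (1 / 2)) :
    ‖opPow (adjoint Ahat ∘L Ahat) s - opPow (adjoint A ∘L A) s‖ ≤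
      (Real.sin (s * Real.pi) / Real.pi) * (1 / s + 1 / (1 / 2 - s))
        * ‖Ahat - A‖ ^ (2 * s) := by
  obtain ⟨hs0, hs2⟩ := hs
  -- unfold opPow to fracPow
  have hfl : ⌊s⌋₊ = 0 := Nat.floor_eq_zero.mpr (by linarith)
  have hne : s ≠ (⌊s⌋₊ : ℝ) := by rw [hfl]; exact_mod_cast hs0.ne'
  have hop : ∀ (B : E →L[ℝ] F), opPow (adjoint B ∘L B) s = fracPow (adjoint B ∘L B) s := by
    intro B
    rw [opPow, if_neg hne, hfl]
    simp [sub_zero, ContinuousLinearMap.one_def]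
  rw [hop Ahat, hop A]
  -- trivial case Ahat = A
  rcases eq_or_lt_of_le (norm_nonneg (Ahat - A)) with hε0 | hε0
  · have hAA : Ahat = A := sub_eq_zero.mp (norm_eq_zero.mp hε0.symm)
    rw [hAA, sub_self, norm_zero, sub_self, norm_zero,
      Real.zero_rpow (by positivity : (2 * s) ≠ 0), mul_zero]
  -- main case
  set ε := ‖Ahat - A‖ with hεdef
  rw [fracPow, fracPow, ← smul_sub]
  have hIhat := integrableOn_bInt Ahat hs0 (by linarith)
  have hIA := integrableOn_bInt A hs0 (by linarith)
  change ‖_ • ((∫ t in Set.Ioi (0:ℝ), bInt Ahat s t) - ∫ t in Set.Ioi (0:ℝ), bInt A s t)‖ ≤ _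
  rw [← integral_sub hIhat hIA]
  -- split the integral
  have ha : (0:ℝ) < ε ^ 2 := by positivity
  have hsplit : Ioi (0:ℝ) = Ioc 0 (ε ^ 2) ∪ Ioi (ε ^ 2) := (Ioc_union_Ioi_eq_Ioi ha.le).symm
  have hdiff : IntegrableOn (fun t => bInt Ahat s t - bInt A s t) (Ioi (0:ℝ)) := hIhat.sub hIA
  have hD1 : IntegrableOn (fun t => bInt Ahat s t - bInt A s t) (Ioc 0 (ε ^ 2)) :=
    hdiff.mono_set (by rw [hsplit]; exact subset_union_left)
  have hD2 : IntegrableOn (fun t => bInt Ahat s t - bInt A s t) (Ioi (ε ^ 2)) :=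
    hdiff.mono_set (by rw [hsplit]; exact subset_union_right)
  have hsum : (∫ t in Ioi (0:ℝ), (bInt Ahat s t - bInt A s t))
      = (∫ t in Ioc 0 (ε ^ 2), (bInt Ahat s t - bInt A s t))
        + ∫ t in Ioi (ε ^ 2), (bInt Ahat s t - bInt A s t) := by
    rw [hsplit]
    exact setIntegral_union (Ioc_disjoint_Ioi le_rfl) measurableSet_Ioi hD1 hD2
  -- the difference written via D
  have heq : ∀ t : ℝ, bInt Ahat s t - bInt A s t
      = t ^ (s - 1) • ((opR Ahat t ∘L (adjoint Ahat ∘L Ahat))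
          - (opR A t ∘L (adjoint A ∘L A))) := by
    intro t; rw [bInt, bInt, smul_sub]
  -- piece 1
  have hp1 : ‖∫ t in Ioc (0:ℝ) (ε ^ 2), (bInt Ahat s t - bInt A s t)‖ ≤ ε ^ (2 * s) / s := by
    have hmaj : IntegrableOn (fun t : ℝ => t ^ (s - 1)) (Ioc (0:ℝ) (ε ^ 2)) := by
      rw [← intervalIntegrable_iff_integrableOn_Ioc_of_le ha.le]
      exact intervalIntegral.intervalIntegrable_rpow' (by linarith)
    refine le_trans (norm_integral_le_of_norm_le hmaj ?_) (le_of_eq ?_)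
    · rw [ae_restrict_iff' measurableSet_Ioc]
      filter_upwards with t ht
      have ht0 : 0 < t := ht.1
      have hr : (0:ℝ) ≤ t ^ (s - 1) := Real.rpow_nonneg ht0.le _
      rw [heq t]
      calc ‖t ^ (s-1) • ((opR Ahat t ∘L (adjoint Ahat ∘L Ahat))
            - (opR A t ∘L (adjoint A ∘L A)))‖
          ≤ ‖t ^ (s-1)‖ * ‖(opR Ahat t ∘L (adjoint Ahat ∘L Ahat))
            - (opR A t ∘L (adjoint A ∘L A))‖ := opNorm_smul_le _ _
        _ ≤ ‖t ^ (s-1)‖ * 1 :=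
            mul_le_mul_of_nonneg_left (normD_le_one A Ahat ht0) (norm_nonneg _)
        _ = t ^ (s - 1) := by rw [mul_one, Real.norm_eq_abs, abs_of_nonneg hr]
    · rw [← intervalIntegral.integral_of_le ha.le,
        integral_rpow (Or.inl (by linarith : (-1:ℝ) < s - 1))]
      have h1 : s - 1 + 1 = s := by ring
      rw [h1, Real.zero_rpow hs0.ne', sub_zero]
      have h2 : (ε ^ 2 : ℝ) ^ s = ε ^ (2 * s) := by
        rw [← Real.rpow_natCast ε 2, ← Real.rpow_mul hε0.le]
        norm_num
      rw [h2]
  -- piece 2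
  have hp2 : ‖∫ t in Ioi (ε ^ 2), (bInt Ahat s t - bInt A s t)‖
      ≤ ε ^ (2 * s) / (1 / 2 - s) := by
    have hmaj : IntegrableOn (fun t : ℝ => ε * t ^ (s - 3/2)) (Ioi (ε ^ 2)) :=
      (integrableOn_Ioi_rpow_of_lt (by linarith) ha).const_mul ε
    refine le_trans (norm_integral_le_of_norm_le hmaj ?_) (le_of_eq ?_)
    · rw [ae_restrict_iff' measurableSet_Ioi]
      filter_upwards with t ht
      have ht0 : 0 < t := lt_trans ha (mem_Ioi.mp ht)
      have hr : (0:ℝ) ≤ t ^ (s - 1) := Real.rpow_nonneg ht0.le _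
      rw [heq t]
      have hds : ε / Real.sqrt t = ε * t ^ (-(1/2) : ℝ) := by
        rw [Real.sqrt_eq_rpow, div_eq_mul_inv, ← Real.rpow_neg ht0.le]
      calc ‖t ^ (s-1) • ((opR Ahat t ∘L (adjoint Ahat ∘L Ahat))
            - (opR A t ∘L (adjoint A ∘L A)))‖
          ≤ ‖t ^ (s-1)‖ * ‖(opR Ahat t ∘L (adjoint Ahat ∘L Ahat))
            - (opR A t ∘L (adjoint A ∘L A))‖ := opNorm_smul_le _ _
        _ ≤ t ^ (s-1) * (ε / Real.sqrt t) := by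
            rw [Real.norm_eq_abs, abs_of_nonneg hr]
            exact mul_le_mul_of_nonneg_left (normD_le_div A Ahat ht0) hr
        _ = ε * t ^ (s - 3/2) := by
            rw [hds, ← mul_assoc, mul_comm (t ^ (s-1)) ε, mul_assoc,
              ← Real.rpow_add ht0]
            congr 2
            ring
    · rw [MeasureTheory.integral_const_mul,
        integral_Ioi_rpow_of_lt (by linarith : s - 3/2 < -1) ha]
      have h1 : s - 3/2 + 1 = s - 1/2 := by ring
      rw [h1]
      have h2 : (ε ^ 2 : ℝ) ^ (s - 1/2) = ε ^ (2 * s - 1) := by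
        rw [← Real.rpow_natCast ε 2, ← Real.rpow_mul hε0.le]
        norm_num
        congr 1
        ring
      rw [h2]
      have h3 : ε * ε ^ (2 * s - 1) = ε ^ (2 * s) := by
        nth_rewrite 1 [← Real.rpow_one ε]
        rw [← Real.rpow_add hε0]
        congr 1
        ring
      rw [show s - 1/2 = -(1/2 - s) by ring, div_neg, neg_div, neg_neg, ← h3, mul_div_assoc]
  -- assemble
  have hc : 0 ≤ Real.sin (s * Real.pi) / Real.pi := by
    apply div_nonneg _ Real.pi_pos.le
    apply Real.sin_nonneg_of_nonneg_of_le_pi (by positivity)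
    nlinarith [Real.pi_pos]
  calc ‖(Real.sin (s * Real.pi) / Real.pi) •
        ∫ t in Ioi (0:ℝ), (bInt Ahat s t - bInt A s t)‖
      ≤ ‖Real.sin (s * Real.pi) / Real.pi‖ *
        ‖∫ t in Ioi (0:ℝ), (bInt Ahat s t - bInt A s t)‖ := opNorm_smul_le _ _
    _ ≤ (Real.sin (s * Real.pi) / Real.pi) * (ε ^ (2*s) / s + ε ^ (2*s) / (1/2 - s)) := by
        rw [Real.norm_eq_abs, abs_of_nonneg hc]
        apply mul_le_mul_of_nonneg_left _ hc
        rw [hsum]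
        exact le_trans (norm_add_le _ _) (add_le_add hp1 hp2)
    _ = (Real.sin (s * Real.pi) / Real.pi) * (1 / s + 1 / (1 / 2 - s)) * ε ^ (2 * s) := by
        ring
end

section
/- Let E and F be real Hilbert spaces, K : E → F a bounded operator, N : E → ℝ a seminorm, and M = sup_{‖ψ‖_F ≤ 1} N(K*ψ) < ∞. Then for every α > 0: (a) the identity (αI + K*K)^{-1} = α^{-1} ( I − K*(αI + KK*)^{-1}K ) holds; and (b) for every f ∈ E, N( (αI + K*K)^{-1} f ) ≤ α^{-1} N(f) + M ‖f‖ / (2 α^{3/2}). -/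
/-!
Both parts rest on the push-through identity `K (αI + K*K) = (αI + KK*) K`: with it, (a) is
checked by multiplying out, once `αI + KK*` is invertible, which holds because it is coercive
with constant `α`. For (b), (a) writes the resolvent applied to `f` as `α⁻¹ (f - K* g)` with
`g = (αI + KK*)⁻¹ K f`. Pairing `(αI + KK*) g = K f` with `g` gives
`α ‖g‖² + ‖K* g‖² = ⟪f, K* g⟫ ≤ ‖f‖ ‖K* g‖`, hence `4 α ‖g‖² ≤ ‖f‖²`, and `N (K* g) ≤ M ‖g‖`.
-/

open ContinuousLinearMap RealInnerProductSpace

/-- The mixed norm `M(A) = sup_{‖ψ‖ ≤ 1} N (A ψ)` of an operator `A : F →L E` relative to a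
seminorm `N` on `E`. -/
noncomputable def mixedNorm {E F : Type*} [NormedAddCommGroup E] [NormedSpace ℝ E]
    [NormedAddCommGroup F] [NormedSpace ℝ F] (N : Seminorm ℝ E) (A : F →L[ℝ] E) : ℝ :=
  sSup {x : ℝ | ∃ ψ : F, ‖ψ‖ ≤ 1 ∧ x = N (A ψ)}

section PushThrough

variable {𝕜 E F : Type*} [NontriviallyNormedField 𝕜] [NormedAddCommGroup E] [NormedSpace 𝕜 E]
  [NormedAddCommGroup F] [NormedSpace 𝕜 F]

theorem ContinuousLinearMap.comp_smul_one_add_comp (A : F →L[𝕜] E) (K : E →L[𝕜] F) (α : 𝕜) :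
    K ∘L (α • 1 + A ∘L K) = (α • 1 + K ∘L A) ∘L K := by
  ext x; simp

theorem ContinuousLinearMap.inverse_smul_one_add_comp (A : F →L[𝕜] E) (K : E →L[𝕜] F) {α : 𝕜}
    (hα : α ≠ 0) (hS : IsUnit (α • 1 + K ∘L A)) :
    Ring.inverse (α • 1 + A ∘L K) = α⁻¹ • (1 - A ∘L (Ring.inverse (α • 1 + K ∘L A) ∘L K)) := by
  set S := α • (1 : F →L[𝕜] F) + K ∘L A
  set T := α • (1 : E →L[𝕜] E) + A ∘L K
  set R := α⁻¹ • (1 - A ∘L (Ring.inverse S ∘L K))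
  have hTA : T ∘L A = A ∘L S := (comp_smul_one_add_comp K A α).symm
  have hKT : K ∘L T = S ∘L K := comp_smul_one_add_comp A K α
  have hTR : T * R = 1 := calc
    T * R = α⁻¹ • (T - A ∘L ((S * Ring.inverse S) ∘L K)) := by
      simp only [R, mul_def, comp_smul, comp_sub, ← comp_assoc, hTA]; rfl
    _ = 1 := by
      rw [Ring.mul_inverse_cancel S hS, one_def, id_comp, add_sub_cancel_right, smul_smul,
        inv_mul_cancel₀ hα, one_smul]
  have hRT : R * T = 1 := calc
    R * T = α⁻¹ • (T - A ∘L ((Ring.inverse S * S) ∘L K)) := by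
      simp only [R, mul_def, smul_comp, sub_comp, comp_assoc, hKT]; rfl
    _ = 1 := by
      rw [Ring.inverse_mul_cancel S hS, one_def, id_comp, add_sub_cancel_right, smul_smul,
        inv_mul_cancel₀ hα, one_smul]
  exact Ring.inverse_unit ⟨T, R, hTR, hRT⟩

end PushThrough

section Hilbert

variable {E F : Type*} [NormedAddCommGroup E] [InnerProductSpace ℝ E] [CompleteSpace E]
  [NormedAddCommGroup F] [InnerProductSpace ℝ F] [CompleteSpace F]

theorem ContinuousLinearMap.inner_smul_one_add_adjoint_comp_self (K : E →L[ℝ] F) (α : ℝ) (x : E) :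
    ⟪(α • 1 + adjoint K ∘L K) x, x⟫ = α * ‖x‖ ^ 2 + ‖K x‖ ^ 2 := by
  simp [inner_add_left, real_inner_smul_left, adjoint_inner_left]

theorem ContinuousLinearMap.isUnit_smul_one_add_adjoint_comp_self (K : E →L[ℝ] F) {α : ℝ}
    (hα : 0 < α) : IsUnit (α • 1 + adjoint K ∘L K) := by
  refine isUnit_of_forall_le_norm_inner_map _ (c := ⟨α, hα.le⟩) hα fun x => ?_
  change ‖x‖ ^ 2 * α ≤ _
  rw [inner_smul_one_add_adjoint_comp_self, Real.norm_eq_abs]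
  nlinarith [le_abs_self (α * ‖x‖ ^ 2 + ‖K x‖ ^ 2), sq_nonneg ‖K x‖]

theorem ContinuousLinearMap.isUnit_smul_one_add_comp_adjoint (K : E →L[ℝ] F) {α : ℝ}
    (hα : 0 < α) : IsUnit (α • 1 + K ∘L adjoint K) := by
  simpa using (adjoint K).isUnit_smul_one_add_adjoint_comp_self hα

theorem ContinuousLinearMap.four_mul_norm_sq_le_norm_sq_of_apply_eq (K : E →L[ℝ] F) {α : ℝ}
    {f : E} {g : F} (hg : (α • 1 + K ∘L adjoint K) g = K f) : 4 * α * ‖g‖ ^ 2 ≤ ‖f‖ ^ 2 := by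
  have key : α * ‖g‖ ^ 2 + ‖adjoint K g‖ ^ 2 = ⟪f, adjoint K g⟫ := by
    have := (adjoint K).inner_smul_one_add_adjoint_comp_self α g
    rw [adjoint_adjoint, hg] at this
    rw [← this, adjoint_inner_right]
  nlinarith [real_inner_le_norm f (adjoint K g), sq_nonneg (‖f‖ - 2 * ‖adjoint K g‖)]

theorem ContinuousLinearMap.norm_inverse_smul_one_add_comp_adjoint_comp_le (K : E →L[ℝ] F)
    {α : ℝ} (hα : 0 < α) :
    ‖Ring.inverse (α • 1 + K ∘L adjoint K) ∘L K‖ ≤ (2 * √α)⁻¹ := by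
  refine opNorm_le_bound _ (by positivity) fun f => ?_
  set g := (Ring.inverse (α • 1 + K ∘L adjoint K) ∘L K) f
  have hg : (α • 1 + K ∘L adjoint K) g = K f := by
    change ((α • 1 + K ∘L adjoint K) * Ring.inverse (α • 1 + K ∘L adjoint K)) (K f) = K f
    rw [Ring.mul_inverse_cancel _ (K.isUnit_smul_one_add_comp_adjoint hα), one_apply_eq_self]
  have h := K.four_mul_norm_sq_le_norm_sq_of_apply_eq hg
  rw [← div_eq_inv_mul, le_div_iff₀ (by positivity)]
  have hsq : (‖g‖ * (2 * √α)) ^ 2 ≤ ‖f‖ ^ 2 := by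
    rw [mul_pow, mul_pow, Real.sq_sqrt hα.le]; linarith
  exact (pow_le_pow_iff_left₀ (by positivity) (norm_nonneg f) two_ne_zero).1 hsq

end Hilbert

section MixedNorm

variable {E F : Type*} [NormedAddCommGroup E] [NormedSpace ℝ E]
  [NormedAddCommGroup F] [NormedSpace ℝ F] {N : Seminorm ℝ E} {A : F →L[ℝ] E}

theorem mixedNorm_nonneg : 0 ≤ mixedNorm N A :=
  Real.sSup_nonneg fun _ ⟨_, _, hx⟩ => hx ▸ apply_nonneg N _

theorem apply_le_mixedNorm_mul_norm (hbdd : BddAbove {x : ℝ | ∃ ψ : F, ‖ψ‖ ≤ 1 ∧ x = N (A ψ)})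
    (ψ : F) : N (A ψ) ≤ mixedNorm N A * ‖ψ‖ := by
  rcases eq_or_ne ψ 0 with rfl | hψ
  · simp
  have hψ' : ‖ψ‖ ≠ 0 := norm_ne_zero_iff.mpr hψ
  have hunit : ‖‖ψ‖⁻¹ • ψ‖ ≤ 1 := by rw [norm_smul, norm_inv, norm_norm, inv_mul_cancel₀ hψ']
  calc N (A ψ) = N (A (‖ψ‖⁻¹ • ψ)) * ‖ψ‖ := by
        rw [map_smul, map_smul_eq_mul, norm_inv, norm_norm, mul_comm, ← mul_assoc,
          mul_inv_cancel₀ hψ', one_mul]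
    _ ≤ mixedNorm N A * ‖ψ‖ := by
        gcongr
        exact le_csSup hbdd ⟨_, hunit, rfl⟩

end MixedNorm

/-- (a) Resolvent identity `(αI + K*K)⁻¹ = α⁻¹ (I − K*(αI + KK*)⁻¹ K)` and (b) the induced
seminorm bound `N((αI + K*K)⁻¹ f) ≤ α⁻¹ N(f) + M ‖f‖ / (2 α^{3/2})` where
`M = sup_{‖ψ‖≤1} N(K* ψ) < ∞` is the mixed norm of `K*`. -/
theorem stmt10
    {E F : Type*} [NormedAddCommGroup E] [InnerProductSpace ℝ E] [CompleteSpace E]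
    [NormedAddCommGroup F] [InnerProductSpace ℝ F] [CompleteSpace F]
    (K : E →L[ℝ] F) (N : Seminorm ℝ E) (M : ℝ)
    (hbdd : BddAbove {x : ℝ | ∃ ψ : F, ‖ψ‖ ≤ 1 ∧ x = N (adjoint K ψ)})
    (hM : M = mixedNorm N (adjoint K))
    (α : ℝ) (hα : 0 < α) :
    Ring.inverse (α • (1 : E →L[ℝ] E) + adjoint K ∘L K) =
      α⁻¹ • ((1 : E →L[ℝ] E)
        - adjoint K ∘L (Ring.inverse (α • (1 : F →L[ℝ] F) + K ∘L adjoint K) ∘L K))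
    ∧ ∀ f : E, N (Ring.inverse (α • (1 : E →L[ℝ] E) + adjoint K ∘L K) f) ≤
        α⁻¹ * N f + M * ‖f‖ / (2 * α ^ ((3 : ℝ) / 2)) := by
  have resolvent := (adjoint K).inverse_smul_one_add_comp K hα.ne'
    (K.isUnit_smul_one_add_comp_adjoint hα)
  refine ⟨resolvent, fun f => ?_⟩
  set B := Ring.inverse (α • 1 + K ∘L adjoint K) ∘L K
  have hN : ∀ ψ, N (adjoint K ψ) ≤ M * ‖ψ‖ := hM ▸ apply_le_mixedNorm_mul_norm hbdd
  have hM0 : 0 ≤ M := hM ▸ mixedNorm_nonneg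
  have hB : ‖B f‖ ≤ (2 * √α)⁻¹ * ‖f‖ :=
    (B.le_opNorm f).trans (by gcongr; exact K.norm_inverse_smul_one_add_comp_adjoint_comp_le hα)
  have hpow : α ^ ((3 : ℝ) / 2) = α * √α := by
    rw [show (3 : ℝ) / 2 = 1 + 1 / 2 by norm_num, Real.rpow_add hα, Real.rpow_one,
      Real.sqrt_eq_rpow]
  calc N (Ring.inverse (α • 1 + adjoint K ∘L K) f) = α⁻¹ * N (f - adjoint K (B f)) := by
        rw [resolvent, smul_apply, map_smul_eq_mul, Real.norm_of_nonneg (by positivity)]; rfl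
    _ ≤ α⁻¹ * (N f + M * ((2 * √α)⁻¹ * ‖f‖)) := by
        gcongr
        refine (map_sub_le_add N _ _).trans ?_
        gcongr
        exact (hN _).trans (by gcongr)
    _ = α⁻¹ * N f + M * ‖f‖ / (2 * α ^ ((3 : ℝ) / 2)) := by
        rw [hpow]; field_simp
end

section
/- Let Λ > 0, 0 < α ≤ Λ, β > 0, c₂ > 0, and let g : [0,Λ] → ℝ be a function such that for every β' ∈ [0, β]: sup_{λ∈[0,Λ]} |(g(λ)λ − 1) λ^{β'/2}| ≤ c₂ α^{β'/2}. Let s : [0,Λ] → [0,∞) be nondecreasing such that λ ↦ s(λ)²/λ^β is nonincreasing on (0,Λ]. Then sup_{λ∈[0,Λ]} |(g(λ)λ − 1) s(λ)| ≤ c₂ s(α). -/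
/-! Below `α` the filter residual is bounded by `c₂` (take `β' = 0`) and `s λ ≤ s α`.
Above `α`, the antitonicity of `s²/λ^β` gives `s λ / λ^{β/2} ≤ s α / α^{β/2}`, and `β' = β`
bounds the residual times `λ^{β/2}` by `c₂ α^{β/2}`. -/

open Set

theorem Real.rpow_half_sq {x : ℝ} (hx : 0 ≤ x) (β : ℝ) : (x ^ (β / 2)) ^ 2 = x ^ β := by
  rw [← Real.rpow_natCast, ← Real.rpow_mul hx]
  norm_num

theorem antitoneOn_div_rpow_half_of_antitoneOn_sq_div_rpow {s : ℝ → ℝ} {t : Set ℝ} {β : ℝ}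
    (ht : t ⊆ Ioi 0) (hs : ∀ x ∈ t, 0 ≤ s x)
    (h : AntitoneOn (fun x => s x ^ 2 / x ^ β) t) :
    AntitoneOn (fun x => s x / x ^ (β / 2)) t := by
  intro a ha b hb hab
  have hsq : (s b / b ^ (β / 2)) ^ 2 ≤ (s a / a ^ (β / 2)) ^ 2 := by
    rw [div_pow, div_pow, Real.rpow_half_sq (ht hb).le, Real.rpow_half_sq (ht ha).le]
    exact h ha hb hab
  exact (pow_le_pow_iff_left₀ (div_nonneg (hs b hb) (Real.rpow_nonneg (ht hb).le _))
    (div_nonneg (hs a ha) (Real.rpow_nonneg (ht ha).le _)) two_ne_zero).mp hsq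

theorem stmt13_general (Λ α β c₂ : ℝ) (hα : 0 < α) (hαΛ : α ≤ Λ)
    (hβ : 0 < β) (g s : ℝ → ℝ)
    (hg : ∀ β' ∈ Set.Icc (0 : ℝ) β, ∀ x ∈ Set.Icc (0 : ℝ) Λ,
      |(g x * x - 1) * x ^ (β' / 2)| ≤ c₂ * α ^ (β' / 2))
    (hs0 : ∀ x ∈ Set.Icc (0 : ℝ) Λ, 0 ≤ s x)
    (hmono : MonotoneOn s (Set.Icc (0 : ℝ) Λ))
    (hanti : AntitoneOn (fun x => s x ^ 2 / x ^ β) (Set.Ioc (0 : ℝ) Λ)) :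
    ∀ x ∈ Set.Icc (0 : ℝ) Λ, |(g x * x - 1) * s x| ≤ c₂ * s α := by
  intro x hx
  have hres₀ : |g x * x - 1| ≤ c₂ := by simpa using hg 0 ⟨le_rfl, hβ.le⟩ x hx
  rw [abs_mul, abs_of_nonneg (hs0 x hx)]
  have hc₂ : 0 ≤ c₂ := (abs_nonneg _).trans hres₀
  rcases le_or_gt x α with hxα | hαx
  · exact mul_le_mul hres₀ (hmono hx ⟨hα.le, hαΛ⟩ hxα) (hs0 x hx) hc₂
  have hx0 : 0 < x := hα.trans hαx
  have hxβ : 0 < x ^ (β / 2) := Real.rpow_pos_of_pos hx0 _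
  have hαβ : 0 < α ^ (β / 2) := Real.rpow_pos_of_pos hα _
  have hres : |g x * x - 1| * x ^ (β / 2) ≤ c₂ * α ^ (β / 2) := by
    simpa [abs_mul, abs_of_pos hxβ] using hg β ⟨hβ.le, le_rfl⟩ x hx
  have hsrc : s x / x ^ (β / 2) ≤ s α / α ^ (β / 2) :=
    antitoneOn_div_rpow_half_of_antitoneOn_sq_div_rpow (fun _ hy => hy.1)
      (fun y hy => hs0 y (Ioc_subset_Icc_self hy)) hanti ⟨hα, hαΛ⟩ ⟨hx0, hx.2⟩ hαx.le
  calc |g x * x - 1| * s x = (|g x * x - 1| * x ^ (β / 2)) * (s x / x ^ (β / 2)) := by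
        field_simp
    _ ≤ c₂ * α ^ (β / 2) * (s α / α ^ (β / 2)) :=
        mul_le_mul hres hsrc (div_nonneg (hs0 x hx) hxβ.le) (mul_nonneg hc₂ hαβ.le)
    _ = c₂ * s α := by field_simp

/-- Bias bound for a general spectral regularization filter `g` at level `α` relative to a
general source function `s`: if `|(g(λ)λ − 1) λ^{β'/2}| ≤ c₂ α^{β'/2}` for all `β' ∈ [0, β]`,
`s` is nonnegative and nondecreasing on `[0,Λ]`, and `λ ↦ s(λ)²/λ^β` is nonincreasing on
`(0,Λ]`, then `|(g(λ)λ − 1) s(λ)| ≤ c₂ s(α)` on `[0,Λ]`. -/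
theorem stmt13 (Λ α β c₂ : ℝ) (hΛ : 0 < Λ) (hα : 0 < α) (hαΛ : α ≤ Λ)
    (hβ : 0 < β) (hc₂ : 0 < c₂) (g s : ℝ → ℝ)
    (hg : ∀ β' ∈ Set.Icc (0 : ℝ) β, ∀ x ∈ Set.Icc (0 : ℝ) Λ,
      |(g x * x - 1) * x ^ (β' / 2)| ≤ c₂ * α ^ (β' / 2))
    (hs0 : ∀ x ∈ Set.Icc (0 : ℝ) Λ, 0 ≤ s x)
    (hmono : MonotoneOn s (Set.Icc (0 : ℝ) Λ))
    (hanti : AntitoneOn (fun x => s x ^ 2 / x ^ β) (Set.Ioc (0 : ℝ) Λ)) :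
    ∀ x ∈ Set.Icc (0 : ℝ) Λ, |(g x * x - 1) * s x| ≤ c₂ * s α :=
  stmt13_general Λ α β c₂ hα hαΛ hβ g s hg hs0 hmono hanti
end

section
/- Let E and F be real Hilbert spaces, C > 0, and let A, Â : E → F be bounded operators with ‖A‖ ≤ C and ‖Â‖ ≤ C. Then for every positive integer k and every s ∈ (0, 1), there exists a constant C' depending only on s, k, and C such that ‖(Â*Â)^k ( (Â*Â)^s − (A*A)^s )‖ ≤ C' ‖Â − A‖. Consequently, for every β > 2 that is not an even integer, ‖(Â*Â)^{β/2} − (A*A)^{β/2}‖ ≤ C'' ‖Â − A‖ for a constant C'' depending only on β and C. -/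
open ContinuousLinearMap

universe u v

open MeasureTheory Set
open scoped NNReal

noncomputable def gdom (s : ℝ) (t : ℝ) : ℝ := if t ≤ 1 then t ^ (s - 1) else t ^ (s - 2)

lemma gdom_nonneg {s t : ℝ} (ht : 0 < t) : 0 ≤ gdom s t := by
  unfold gdom; split <;> positivity

lemma integrableOn_gdom {s : ℝ} (hs : s ∈ Set.Ioo (0:ℝ) 1) :
    IntegrableOn (gdom s) (Ioi (0:ℝ)) := by
  have h1 : IntegrableOn (gdom s) (Ioc (0:ℝ) 1) := by
    have : IntegrableOn (fun t : ℝ => t ^ (s - 1)) (Ioc (0:ℝ) 1) := by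
      have := intervalIntegral.intervalIntegrable_rpow' (a := 0) (b := 1)
        (r := s - 1) (by linarith [hs.1])
      rwa [intervalIntegrable_iff_integrableOn_Ioc_of_le zero_le_one] at this
    exact this.congr_fun (fun t ht => by simp [gdom, ht.2]) measurableSet_Ioc
  have h2 : IntegrableOn (gdom s) (Ioi (1:ℝ)) := by
    have : IntegrableOn (fun t : ℝ => t ^ (s - 2)) (Ioi (1:ℝ)) :=
      integrableOn_Ioi_rpow_of_lt (by linarith [hs.2]) one_pos
    exact this.congr_fun (fun t ht => by
      simp only [gdom, if_neg (not_le.mpr (mem_Ioi.mp ht))]) measurableSet_Ioi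
  have := h1.union h2
  rwa [Ioc_union_Ioi_eq_Ioi zero_le_one] at this


section core
variable {E : Type*} [NormedAddCommGroup E] [InnerProductSpace ℝ E] [CompleteSpace E]
local notation "⟪" x ", " y "⟫" => @inner ℝ _ _ x y
lemma norm_add_sq' (T : E →L[ℝ] E) (t : ℝ) (x : E) :
    ‖(t • (1 : E →L[ℝ] E) + T) x‖^2
      = t^2 * ‖x‖^2 + 2 * t * ⟪T x, x⟫ + ‖T x‖^2 := by
  have h1 : (t • (1 : E →L[ℝ] E) + T) x = t • x + T x := by simp
  rw [h1, ← real_inner_self_eq_norm_sq]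
  rw [inner_add_add_self]
  simp [inner_add_add_self, real_inner_smul_left, real_inner_smul_right,
    real_inner_self_eq_norm_sq, real_inner_comm (T x) x, norm_smul, mul_pow, sq_abs]
  ring

lemma coercive (T : E →L[ℝ] E) (hT : ∀ x, 0 ≤ ⟪T x, x⟫) {t : ℝ} (ht : 0 < t) (x : E) :
    t * ‖x‖ ≤ ‖(t • (1 : E →L[ℝ] E) + T) x‖ := by
  refine le_of_pow_le_pow_left₀ two_ne_zero (norm_nonneg _) ?_
  rw [norm_add_sq' T t x]
  nlinarith [norm_nonneg (T x), hT x, norm_nonneg x, ht.le]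

lemma subord (T : E →L[ℝ] E) (hT : ∀ x, 0 ≤ ⟪T x, x⟫) {t : ℝ} (ht : 0 < t) (x : E) :
    ‖T x‖ ≤ ‖(t • (1 : E →L[ℝ] E) + T) x‖ := by
  refine le_of_pow_le_pow_left₀ two_ne_zero (norm_nonneg _) ?_
  rw [norm_add_sq' T t x]
  nlinarith [norm_nonneg (T x), hT x, norm_nonneg x, ht.le]

lemma isUnit_smul_one_add (T : E →L[ℝ] E) (hT : ∀ x, 0 ≤ ⟪T x, x⟫) {t : ℝ} (ht : 0 < t) :
    IsUnit (t • (1 : E →L[ℝ] E) + T) := by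
  set S := t • (1 : E →L[ℝ] E) + T with hS
  have hanti : AntilipschitzWith t.toNNReal⁻¹ S := by
    refine ContinuousLinearMap.antilipschitz_of_bound S fun x => ?_
    rw [NNReal.coe_inv, Real.coe_toNNReal _ ht.le, inv_mul_eq_div, le_div_iff₀ ht]
    calc ‖x‖ * t = t * ‖x‖ := mul_comm _ _
    _ ≤ ‖S x‖ := coercive T hT ht x
  have hinj : S.ker = ⊥ := (LinearMap.ker_eq_bot (f := (S : E →ₗ[ℝ] E))).mpr hanti.injective
  have hclosed : IsClosed (S.range : Set E) :=
    hanti.isClosed_range S.uniformContinuous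
  have : CompleteSpace S.range := hclosed.completeSpace_coe
  have hsurj : S.range = ⊤ := by
    rw [← Submodule.orthogonal_eq_bot_iff]
    rw [Submodule.eq_bot_iff]
    intro x hxmem
    have h0 : ⟪S x, x⟫ = 0 := by
      have := (Submodule.mem_orthogonal _ x).mp hxmem (S x) (LinearMap.mem_range_self _ x)
      exact this
    have h1 : ⟪S x, x⟫ = t * ‖x‖^2 + ⟪T x, x⟫ := by
      simp [hS, inner_add_left, real_inner_smul_left, real_inner_self_eq_norm_sq]
    have hx2 : t * ‖x‖^2 ≤ 0 := by rw [h0] at h1; linarith [hT x]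
    have : ‖x‖ = 0 := by
      by_contra hx
      have h3 : 0 < t * ‖x‖^2 :=
        mul_pos ht (pow_pos (lt_of_le_of_ne (norm_nonneg x) (Ne.symm hx)) 2)
      linarith
    exact norm_eq_zero.mp this
  exact ⟨(ContinuousLinearEquiv.ofBijective S hinj hsurj).toUnit, rfl⟩



noncomputable def res (T : E →L[ℝ] E) (t : ℝ) : E →L[ℝ] E :=
  Ring.inverse (t • (1 : E →L[ℝ] E) + T)

lemma res_mul (T : E →L[ℝ] E) (hT : ∀ x, 0 ≤ ⟪T x, x⟫) {t : ℝ} (ht : 0 < t) :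
    res T t ∘L (t • (1 : E →L[ℝ] E) + T) = 1 := by
  rw [← ContinuousLinearMap.mul_def]
  exact Ring.inverse_mul_cancel _ (isUnit_smul_one_add T hT ht)

lemma mul_res (T : E →L[ℝ] E) (hT : ∀ x, 0 ≤ ⟪T x, x⟫) {t : ℝ} (ht : 0 < t) :
    (t • (1 : E →L[ℝ] E) + T) ∘L res T t = 1 := by
  rw [← ContinuousLinearMap.mul_def]
  exact Ring.mul_inverse_cancel _ (isUnit_smul_one_add T hT ht)

lemma apply_res (T : E →L[ℝ] E) (hT : ∀ x, 0 ≤ ⟪T x, x⟫) {t : ℝ} (ht : 0 < t) (y : E) :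
    (t • (1 : E →L[ℝ] E) + T) (res T t y) = y := by
  have := congrArg (fun f : E →L[ℝ] E => f y) (mul_res T hT ht)
  simpa using this

lemma norm_res_le (T : E →L[ℝ] E) (hT : ∀ x, 0 ≤ ⟪T x, x⟫) {t : ℝ} (ht : 0 < t) :
    ‖res T t‖ ≤ 1 / t := by
  refine ContinuousLinearMap.opNorm_le_bound _ (by positivity) fun y => ?_
  have h1 := coercive T hT ht (res T t y)
  rw [apply_res T hT ht y] at h1
  rw [div_mul_eq_mul_div, le_div_iff₀ ht]
  linarith [h1]

lemma res_comp_eq (T : E →L[ℝ] E) (hT : ∀ x, 0 ≤ ⟪T x, x⟫) {t : ℝ} (ht : 0 < t) :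
    res T t ∘L T = 1 - t • res T t := by
  have h := res_mul T hT ht
  rw [ContinuousLinearMap.comp_add] at h
  have : res T t ∘L (t • (1 : E →L[ℝ] E)) = t • res T t := by
    ext x; simp
  rw [this] at h
  linear_combination (norm := abel1) h -- probably fails
  
lemma comp_res_eq (T : E →L[ℝ] E) (hT : ∀ x, 0 ≤ ⟪T x, x⟫) {t : ℝ} (ht : 0 < t) :
    T ∘L res T t = 1 - t • res T t := by
  have h := mul_res T hT ht
  rw [ContinuousLinearMap.add_comp] at h
  have : (t • (1 : E →L[ℝ] E)) ∘L res T t = t • res T t := by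
    ext x; simp
  rw [this] at h
  linear_combination (norm := abel1) h

lemma norm_comp_res_le (T : E →L[ℝ] E) (hT : ∀ x, 0 ≤ ⟪T x, x⟫) {t : ℝ} (ht : 0 < t) :
    ‖T ∘L res T t‖ ≤ 1 := by
  refine ContinuousLinearMap.opNorm_le_bound _ zero_le_one fun y => ?_
  have h1 := subord T hT ht (res T t y)
  rw [apply_res T hT ht y] at h1
  simpa using h1

lemma continuousOn_res (T : E →L[ℝ] E) (hT : ∀ x, 0 ≤ ⟪T x, x⟫) :
    ContinuousOn (fun t : ℝ => res T t) (Ioi (0:ℝ)) := by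
  intro t ht
  have h1 : ContinuousAt (fun t : ℝ => t • (1 : E →L[ℝ] E) + T) t := by fun_prop
  have h2 : ContinuousAt Ring.inverse (t • (1 : E →L[ℝ] E) + T) := by
    obtain ⟨u, hu⟩ := isUnit_smul_one_add T hT ht
    rw [← hu]
    exact NormedRing.inverse_continuousAt u
  have h3 : ContinuousAt (fun s : ℝ => Ring.inverse (s • (1 : E →L[ℝ] E) + T)) t :=
    ContinuousAt.comp (x := t) (f := fun s : ℝ => s • (1 : E →L[ℝ] E) + T) h2 h1
  exact h3.continuousWithinAt


/-- the integrand of `fracPow`. -/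
noncomputable def Fint (T : E →L[ℝ] E) (s : ℝ) (t : ℝ) : E →L[ℝ] E :=
  t ^ (s - 1) • (res T t ∘L T)

lemma fracPow_eq (T : E →L[ℝ] E) (s : ℝ) :
    fracPow T s = (Real.sin (s * Real.pi) / Real.pi) • ∫ t in Ioi (0:ℝ), Fint T s t := rfl

lemma norm_res_comp_le (T : E →L[ℝ] E) (hT : ∀ x, 0 ≤ ⟪T x, x⟫) {t : ℝ} (ht : 0 < t) :
    ‖res T t ∘L T‖ ≤ 1 := by
  rw [res_comp_eq T hT ht, ← comp_res_eq T hT ht]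
  exact norm_comp_res_le T hT ht

lemma aesm_Fint (T : E →L[ℝ] E) (hT : ∀ x, 0 ≤ ⟪T x, x⟫) (s : ℝ) :
    AEStronglyMeasurable (Fint T s) (volume.restrict (Ioi (0:ℝ))) := by
  haveI : SecondCountableTopologyEither ℝ (E →L[ℝ] E) :=
    secondCountableTopologyEither_of_left ℝ _
  apply ContinuousOn.aestronglyMeasurable ?_ measurableSet_Ioi
  refine ContinuousOn.smul (f := fun t : ℝ => t ^ (s-1)) (g := fun t => res T t ∘L T) ?_ ?_
  · intro t ht
    exact (Real.continuousAt_rpow_const t (s-1) (Or.inl (ne_of_gt ht))).continuousWithinAt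
  · exact (continuousOn_res T hT).clm_comp continuousOn_const

lemma norm_Fint_le (T : E →L[ℝ] E) (hT : ∀ x, 0 ≤ ⟪T x, x⟫) (s : ℝ) {t : ℝ} (ht : 0 < t) :
    ‖Fint T s t‖ ≤ max 1 ‖T‖ * gdom s t := by
  rw [Fint, norm_smul (t ^ (s-1)) (res T t ∘L T), Real.norm_eq_abs, abs_of_nonneg (Real.rpow_nonneg ht.le _)]
  unfold gdom
  have hpow : (0:ℝ) ≤ t ^ (s-1) := Real.rpow_nonneg ht.le _
  by_cases h1 : t ≤ 1
  · rw [if_pos h1]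
    have h := norm_res_comp_le T hT ht
    nlinarith [le_max_left (1:ℝ) ‖T‖, norm_nonneg (res T t ∘L T)]
  · rw [if_neg h1]
    have h2 : ‖res T t ∘L T‖ ≤ (1/t) * ‖T‖ :=
      le_trans (opNorm_comp_le _ _)
        (mul_le_mul_of_nonneg_right (norm_res_le T hT ht) (norm_nonneg _))
    have h3 : t ^ (s-2) = t ^ (s-1) / t := by
      rw [show s - 2 = s - 1 - 1 by ring, Real.rpow_sub ht, Real.rpow_one]
    have h4 : ‖res T t ∘L T‖ * t ≤ ‖T‖ := by
      have h6 := mul_le_mul_of_nonneg_right h2 ht.le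
      have h5 : (1/t * ‖T‖) * t = ‖T‖ := by field_simp
      rwa [h5] at h6
    rw [h3, ← mul_div_assoc, le_div_iff₀ ht]
    nlinarith [h4, le_max_right (1:ℝ) ‖T‖, norm_nonneg (res T t ∘L T), norm_nonneg T]

lemma integrableOn_Fint (T : E →L[ℝ] E) (hT : ∀ x, 0 ≤ ⟪T x, x⟫) {s : ℝ}
    (hs : s ∈ Set.Ioo (0:ℝ) 1) :
    IntegrableOn (Fint T s) (Ioi (0:ℝ)) := by
  refine Integrable.mono' (((integrableOn_gdom hs).const_mul (max 1 ‖T‖))) (aesm_Fint T hT s) ?_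
  rw [ae_restrict_iff' measurableSet_Ioi]
  exact Filter.Eventually.of_forall fun t ht => norm_Fint_le T hT s ht

end core

section key
variable {E : Type*} [NormedAddCommGroup E] [InnerProductSpace ℝ E] [CompleteSpace E]
local notation "⟪" x ", " y "⟫" => @inner ℝ _ _ x y

lemma norm_pow_le'' (T : E →L[ℝ] E) (m : ℕ) : ‖T ^ m‖ ≤ ‖T‖ ^ m := by
  induction m with
  | zero => simpa [ContinuousLinearMap.one_def] using ContinuousLinearMap.norm_id_le
  | succ n ih =>
    rw [pow_succ, pow_succ]
    exact le_trans (norm_mul_le _ _) (mul_le_mul_of_nonneg_right ih (norm_nonneg _))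

lemma diff_res_comp (Th T : E →L[ℝ] E) (hTh : ∀ x, 0 ≤ ⟪Th x, x⟫) (hT : ∀ x, 0 ≤ ⟪T x, x⟫)
    {t : ℝ} (ht : 0 < t) :
    res Th t ∘L Th - res T t ∘L T = t • (res Th t ∘L ((Th - T) ∘L res T t)) := by
  have e1 : res Th t ∘L ((Th - T) ∘L res T t) = res T t - res Th t := by
    have h1 : res Th t * (t • (1 : E →L[ℝ] E) + Th) = 1 := res_mul Th hTh ht
    have h2 : (t • (1 : E →L[ℝ] E) + T) * res T t = 1 := mul_res T hT ht
    have e2 : Th - T = (t • (1 : E →L[ℝ] E) + Th) - (t • (1 : E →L[ℝ] E) + T) := by abel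
    show res Th t * ((Th - T) * res T t) = res T t - res Th t
    rw [e2, sub_mul, mul_sub, ← mul_assoc, h1, h2, one_mul, mul_one]
  rw [e1, res_comp_eq Th hTh ht, res_comp_eq T hT ht, smul_sub]
  abel

lemma norm_pow_comp_res_le_1 (Th : E →L[ℝ] E) (hTh : ∀ x, 0 ≤ ⟪Th x, x⟫)
    {t : ℝ} (ht : 0 < t) {k : ℕ} (hk : 1 ≤ k) :
    ‖(Th ^ k) ∘L res Th t‖ ≤ ‖Th‖ ^ (k - 1) := by
  obtain ⟨m, rfl⟩ : ∃ m, k = m + 1 := ⟨k - 1, (Nat.succ_pred_eq_of_pos hk).symm⟩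
  rw [pow_succ, ContinuousLinearMap.mul_def, ContinuousLinearMap.comp_assoc]
  refine le_trans (opNorm_comp_le _ _) ?_
  simp only [Nat.add_sub_cancel]
  calc ‖Th ^ m‖ * ‖Th ∘L res Th t‖ ≤ ‖Th‖ ^ m * 1 :=
        mul_le_mul (norm_pow_le'' Th m) (norm_comp_res_le Th hTh ht) (norm_nonneg _)
          (by positivity)
  _ = ‖Th‖ ^ m := mul_one _

lemma norm_pow_comp_res_le_2 (Th : E →L[ℝ] E) (hTh : ∀ x, 0 ≤ ⟪Th x, x⟫)
    {t : ℝ} (ht : 0 < t) (k : ℕ) :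
    ‖(Th ^ k) ∘L res Th t‖ ≤ ‖Th‖ ^ k * (1 / t) := by
  refine le_trans (opNorm_comp_le _ _) ?_
  exact mul_le_mul (norm_pow_le'' Th k) (norm_res_le Th hTh ht) (norm_nonneg _) (by positivity)

lemma key_pointwise (Th T : E →L[ℝ] E) (hTh : ∀ x, 0 ≤ ⟪Th x, x⟫) (hT : ∀ x, 0 ≤ ⟪T x, x⟫)
    {N : ℝ} (hN : 1 ≤ N) (hTh' : ‖Th‖ ≤ N) (hT' : ‖T‖ ≤ N) {k : ℕ} (hk : 1 ≤ k)
    (s : ℝ) {t : ℝ} (ht : 0 < t) :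
    ‖(Th ^ k) ∘L (Fint Th s t - Fint T s t)‖ ≤ N ^ k * ‖Th - T‖ * gdom s t := by
  have hN0 : (0:ℝ) < N := lt_of_lt_of_le one_pos hN
  have hid : (Th ^ k) ∘L (Fint Th s t - Fint T s t)
      = (t ^ (s-1) * t) • ((Th ^ k) ∘L (res Th t ∘L ((Th - T) ∘L res T t))) := by
    unfold Fint
    rw [← smul_sub, diff_res_comp Th T hTh hT ht, ContinuousLinearMap.comp_smul,
      ContinuousLinearMap.comp_smul, smul_smul]
  rw [hid, norm_smul (t ^ (s-1) * t) ((Th ^ k) ∘L (res Th t ∘L ((Th - T) ∘L res T t))),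
    Real.norm_eq_abs, abs_of_nonneg (by positivity)]
  have hassoc : (Th ^ k) ∘L (res Th t ∘L ((Th - T) ∘L res T t))
      = ((Th ^ k) ∘L res Th t) ∘L ((Th - T) ∘L res T t) :=
    (ContinuousLinearMap.comp_assoc _ _ _).symm
  have hbase : ‖(Th ^ k) ∘L (res Th t ∘L ((Th - T) ∘L res T t))‖
      ≤ ‖(Th ^ k) ∘L res Th t‖ * (‖Th - T‖ * ‖res T t‖) := by
    rw [hassoc]
    exact le_trans (opNorm_comp_le _ _)
      (mul_le_mul_of_nonneg_left (opNorm_comp_le _ _) (norm_nonneg _))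
  unfold gdom
  by_cases h1 : t ≤ 1
  · rw [if_pos h1]
    have b1 : ‖(Th ^ k) ∘L res Th t‖ ≤ N ^ (k-1) :=
      le_trans (norm_pow_comp_res_le_1 Th hTh ht hk)
        (pow_le_pow_left₀ (norm_nonneg _) hTh' _)
    calc t ^ (s-1) * t * ‖(Th ^ k) ∘L (res Th t ∘L ((Th - T) ∘L res T t))‖
        ≤ t ^ (s-1) * t * (N ^ (k-1) * (‖Th - T‖ * (1/t))) := by
          refine mul_le_mul_of_nonneg_left (le_trans hbase ?_) (by positivity)
          exact mul_le_mul b1 (mul_le_mul_of_nonneg_left (norm_res_le T hT ht)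
            (norm_nonneg _)) (by positivity) (by positivity)
    _ = N ^ (k-1) * ‖Th - T‖ * t ^ (s-1) := by field_simp
    _ ≤ N ^ k * ‖Th - T‖ * t ^ (s-1) := by
          have h5 : N ^ (k-1) ≤ N ^ k := pow_le_pow_right₀ hN (Nat.sub_le k 1)
          exact mul_le_mul_of_nonneg_right
            (mul_le_mul_of_nonneg_right h5 (norm_nonneg _)) (by positivity)
  · rw [if_neg h1]
    have b2 : ‖(Th ^ k) ∘L res Th t‖ ≤ N ^ k * (1/t) :=
      le_trans (norm_pow_comp_res_le_2 Th hTh ht k)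
        (mul_le_mul_of_nonneg_right (pow_le_pow_left₀ (norm_nonneg _) hTh' _) (by positivity))
    have h3 : t ^ (s-2) = t ^ (s-1) / t := by
      rw [show s - 2 = s - 1 - 1 by ring, Real.rpow_sub ht, Real.rpow_one]
    calc t ^ (s-1) * t * ‖(Th ^ k) ∘L (res Th t ∘L ((Th - T) ∘L res T t))‖
        ≤ t ^ (s-1) * t * ((N ^ k * (1/t)) * (‖Th - T‖ * (1/t))) := by
          refine mul_le_mul_of_nonneg_left (le_trans hbase ?_) (by positivity)
          exact mul_le_mul b2 (mul_le_mul_of_nonneg_left (norm_res_le T hT ht)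
            (norm_nonneg _)) (by positivity) (by positivity)
    _ = N ^ k * ‖Th - T‖ * t ^ (s-2) := by rw [h3]; field_simp

end key


section keyint
variable {E : Type*} [NormedAddCommGroup E] [InnerProductSpace ℝ E] [CompleteSpace E]
local notation "⟪" x ", " y "⟫" => @inner ℝ _ _ x y

lemma key_integral (Th T : E →L[ℝ] E) (hTh : ∀ x, 0 ≤ ⟪Th x, x⟫) (hT : ∀ x, 0 ≤ ⟪T x, x⟫)
    {N : ℝ} (hN : 1 ≤ N) (hTh' : ‖Th‖ ≤ N) (hT' : ‖T‖ ≤ N) {k : ℕ} (hk : 1 ≤ k)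
    {s : ℝ} (hs : s ∈ Set.Ioo (0:ℝ) 1) :
    ‖(Th ^ k) ∘L (fracPow Th s - fracPow T s)‖
      ≤ (|Real.sin (s * Real.pi) / Real.pi| * (∫ t in Ioi (0:ℝ), gdom s t) * N ^ k)
          * ‖Th - T‖ := by
  have hIh := integrableOn_Fint Th hTh hs
  have hI := integrableOn_Fint T hT hs
  have hsub : IntegrableOn (fun t => Fint Th s t - Fint T s t) (Ioi (0:ℝ)) := hIh.sub hI
  have hdiff : fracPow Th s - fracPow T s
      = (Real.sin (s * Real.pi) / Real.pi) • ∫ t in Ioi (0:ℝ), (Fint Th s t - Fint T s t) := by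
    rw [fracPow_eq, fracPow_eq, ← smul_sub, integral_sub hIh hI]
  set L : (E →L[ℝ] E) →L[ℝ] (E →L[ℝ] E) := ContinuousLinearMap.compL ℝ E E E (Th ^ k) with hL
  have hLapp : ∀ X : E →L[ℝ] E, L X = (Th ^ k) ∘L X := fun X => rfl
  have hcomm : (Th ^ k) ∘L (∫ t in Ioi (0:ℝ), (Fint Th s t - Fint T s t))
      = ∫ t in Ioi (0:ℝ), (Th ^ k) ∘L (Fint Th s t - Fint T s t) := by
    rw [← hLapp, ← L.integral_comp_comm hsub]
    simp only [hLapp]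
  have hmain : ‖(Th ^ k) ∘L (fracPow Th s - fracPow T s)‖
      = |Real.sin (s * Real.pi) / Real.pi|
        * ‖∫ t in Ioi (0:ℝ), (Th ^ k) ∘L (Fint Th s t - Fint T s t)‖ := by
    rw [hdiff, ContinuousLinearMap.comp_smul,
      norm_smul (Real.sin (s * Real.pi) / Real.pi)
        ((Th ^ k) ∘L (∫ t in Ioi (0:ℝ), (Fint Th s t - Fint T s t))),
      Real.norm_eq_abs, hcomm]
  have hbd : ‖∫ t in Ioi (0:ℝ), (Th ^ k) ∘L (Fint Th s t - Fint T s t)‖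
      ≤ ∫ t in Ioi (0:ℝ), (N ^ k * ‖Th - T‖) * gdom s t := by
    refine norm_integral_le_of_norm_le ((integrableOn_gdom hs).const_mul _) ?_
    rw [ae_restrict_iff' measurableSet_Ioi]
    refine Filter.Eventually.of_forall fun t ht => ?_
    refine le_trans (key_pointwise Th T hTh hT hN hTh' hT' hk s (mem_Ioi.mp ht)) (le_of_eq ?_)
    ring
  have hpull : ∫ t in Ioi (0:ℝ), (N ^ k * ‖Th - T‖) * gdom s t
      = (N ^ k * ‖Th - T‖) * ∫ t in Ioi (0:ℝ), gdom s t := by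
    simpa [smul_eq_mul] using
      integral_smul (μ := volume.restrict (Ioi (0:ℝ))) (N ^ k * ‖Th - T‖) (gdom s)
  rw [hmain]
  refine le_trans (mul_le_mul_of_nonneg_left (le_trans hbd (le_of_eq hpull)) (abs_nonneg _))
    (le_of_eq (by ring))

lemma norm_fracPow_le (T : E →L[ℝ] E) (hT : ∀ x, 0 ≤ ⟪T x, x⟫) {N : ℝ} (hN : 1 ≤ N)
    (hT' : ‖T‖ ≤ N) {s : ℝ} (hs : s ∈ Set.Ioo (0:ℝ) 1) :
    ‖fracPow T s‖ ≤ |Real.sin (s * Real.pi) / Real.pi| * (N * ∫ t in Ioi (0:ℝ), gdom s t) := by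
  rw [fracPow_eq,
    norm_smul (Real.sin (s * Real.pi) / Real.pi) (∫ t in Ioi (0:ℝ), Fint T s t),
    Real.norm_eq_abs]
  refine mul_le_mul_of_nonneg_left ?_ (abs_nonneg _)
  have hbd : ‖∫ t in Ioi (0:ℝ), Fint T s t‖ ≤ ∫ t in Ioi (0:ℝ), N * gdom s t := by
    refine norm_integral_le_of_norm_le ((integrableOn_gdom hs).const_mul _) ?_
    rw [ae_restrict_iff' measurableSet_Ioi]
    refine Filter.Eventually.of_forall fun t ht => ?_
    refine le_trans (norm_Fint_le T hT s (mem_Ioi.mp ht)) ?_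
    exact mul_le_mul_of_nonneg_right (max_le hN hT') (gdom_nonneg (mem_Ioi.mp ht))
  refine le_trans hbd (le_of_eq ?_)
  simpa [smul_eq_mul] using
    integral_smul (μ := volume.restrict (Ioi (0:ℝ))) N (gdom s)

end keyint


section assemble
variable {E : Type u} {F : Type v} [NormedAddCommGroup E] [InnerProductSpace ℝ E]
  [CompleteSpace E] [NormedAddCommGroup F] [InnerProductSpace ℝ F] [CompleteSpace F]
local notation "⟪" x ", " y "⟫" => @inner ℝ _ _ x y
open ContinuousLinearMap

lemma pos_adj_comp (A : E →L[ℝ] F) : ∀ x, 0 ≤ ⟪(adjoint A ∘L A) x, x⟫ := fun x => by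
  have h : ⟪(adjoint A ∘L A) x, x⟫ = ⟪A x, A x⟫ := by
    rw [ContinuousLinearMap.comp_apply, ContinuousLinearMap.adjoint_inner_left]
  rw [h]
  exact real_inner_self_nonneg

lemma norm_adj_eq (A : E →L[ℝ] F) : ‖adjoint A‖ = ‖A‖ :=
  LinearIsometryEquiv.norm_map ContinuousLinearMap.adjoint A

lemma norm_adj_comp_le {A : E →L[ℝ] F} {C : ℝ} (hA : ‖A‖ ≤ C) (hC : 0 ≤ C) :
    ‖adjoint A ∘L A‖ ≤ max 1 (C^2) := by
  refine le_trans (opNorm_comp_le _ _) (le_trans ?_ (le_max_right _ _))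
  rw [norm_adj_eq]
  nlinarith [norm_nonneg A]

lemma norm_diffT_le {A Ahat : E →L[ℝ] F} {C : ℝ} (hA : ‖A‖ ≤ C) (hAh : ‖Ahat‖ ≤ C)
    (hC : 0 ≤ C) :
    ‖adjoint Ahat ∘L Ahat - adjoint A ∘L A‖ ≤ (2*C) * ‖Ahat - A‖ := by
  have hid : adjoint Ahat ∘L Ahat - adjoint A ∘L A
      = adjoint Ahat ∘L (Ahat - A) + (adjoint Ahat - adjoint A) ∘L A := by
    rw [ContinuousLinearMap.comp_sub, ContinuousLinearMap.sub_comp]; abel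
  rw [hid]
  have hadj : adjoint Ahat - adjoint A = adjoint (Ahat - A) := by
    simp [map_sub]
  refine le_trans (norm_add_le _ _) ?_
  have h1 : ‖adjoint Ahat ∘L (Ahat - A)‖ ≤ C * ‖Ahat - A‖ :=
    le_trans (opNorm_comp_le _ _)
      (mul_le_mul_of_nonneg_right (by rw [norm_adj_eq]; exact hAh) (norm_nonneg _))
  have h2 : ‖(adjoint Ahat - adjoint A) ∘L A‖ ≤ ‖Ahat - A‖ * C := by
    refine le_trans (opNorm_comp_le _ _) ?_
    rw [hadj, norm_adj_eq]
    exact mul_le_mul_of_nonneg_left hA (norm_nonneg _)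
  nlinarith [h1, h2]

lemma opPow_Ioo (T : E →L[ℝ] E) {s : ℝ} (hs : s ∈ Set.Ioo (0:ℝ) 1) :
    opPow T s = fracPow T s := by
  have h0 : ⌊s⌋₊ = 0 := Nat.floor_eq_zero.mpr hs.2
  unfold opPow
  rw [if_neg (by rw [h0]; exact_mod_cast ne_of_gt hs.1), h0]
  simp [ContinuousLinearMap.one_def]

lemma pow_sub_pow_norm (a b : E →L[ℝ] E) {N : ℝ} (hN : 1 ≤ N) (ha : ‖a‖ ≤ N)
    (hb : ‖b‖ ≤ N) (m : ℕ) : ‖a^m - b^m‖ ≤ m * N^m * ‖a - b‖ := by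
  induction m with
  | zero => simp
  | succ n ih =>
    have hid : a^(n+1) - b^(n+1) = a^n * (a - b) + (a^n - b^n) * b := by noncomm_ring
    rw [hid]
    refine le_trans (norm_add_le _ _) ?_
    have h1 : ‖a^n * (a - b)‖ ≤ N^n * ‖a - b‖ :=
      le_trans (norm_mul_le _ _) (mul_le_mul_of_nonneg_right
        (le_trans (norm_pow_le'' a n) (pow_le_pow_left₀ (norm_nonneg a) ha n)) (norm_nonneg _))
    have h2 : ‖(a^n - b^n) * b‖ ≤ (n * N^n * ‖a - b‖) * N :=
      le_trans (norm_mul_le _ _) (mul_le_mul ih hb (norm_nonneg _)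
        (by positivity))
    have hp : N^n ≤ N^(n+1) := pow_le_pow_right₀ hN (Nat.le_succ n)
    have hp0 : (0:ℝ) ≤ N^n := by positivity
    have key : N^n * ‖a - b‖ + (n * N^n * ‖a - b‖) * N ≤ (n+1) * N^(n+1) * ‖a - b‖ := by
      have e1 : (n * N^n * ‖a - b‖) * N = n * N^(n+1) * ‖a - b‖ := by ring
      rw [e1]
      have e2 : ((n:ℝ)+1) * N^(n+1) * ‖a - b‖
          = N^(n+1) * ‖a - b‖ + n * N^(n+1) * ‖a - b‖ := by ring
      rw [e2]
      have : N^n * ‖a - b‖ ≤ N^(n+1) * ‖a - b‖ :=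
        mul_le_mul_of_nonneg_right hp (norm_nonneg _)
      linarith
    push_cast
    linarith [h1, h2, key]

end assemble

noncomputable def K1 (C : ℝ) (k : ℕ) (s : ℝ) : ℝ :=
  (|Real.sin (s * Real.pi) / Real.pi| * (∫ t in Ioi (0:ℝ), gdom s t) * (max 1 (C^2))^k)
    * (2*C)

lemma integral_gdom_nonneg (s : ℝ) : 0 ≤ ∫ t in Ioi (0:ℝ), gdom s t :=
  setIntegral_nonneg measurableSet_Ioi (fun t ht => gdom_nonneg (mem_Ioi.mp ht))

section main
variable {E : Type u} {F : Type v} [NormedAddCommGroup E] [InnerProductSpace ℝ E]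
  [CompleteSpace E] [NormedAddCommGroup F] [InnerProductSpace ℝ F] [CompleteSpace F]

lemma main1 {C : ℝ} (hC : 0 < C) {k : ℕ} (hk : 1 ≤ k) {s : ℝ} (hs : s ∈ Set.Ioo (0:ℝ) 1)
    (A Ahat : E →L[ℝ] F) (hA : ‖A‖ ≤ C) (hAh : ‖Ahat‖ ≤ C) :
    ‖((adjoint Ahat ∘L Ahat) ^ k) ∘L
        (opPow (adjoint Ahat ∘L Ahat) s - opPow (adjoint A ∘L A) s)‖ ≤
      K1 C k s * ‖Ahat - A‖ := by
  have hN : 1 ≤ max 1 (C^2) := le_max_left _ _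
  have hg0 := integral_gdom_nonneg s
  rw [opPow_Ioo _ hs, opPow_Ioo _ hs]
  refine le_trans (key_integral _ _ (pos_adj_comp Ahat) (pos_adj_comp A) hN
    (norm_adj_comp_le hAh hC.le) (norm_adj_comp_le hA hC.le) hk hs) ?_
  have hd := norm_diffT_le hA hAh hC.le
  refine le_trans (mul_le_mul_of_nonneg_left hd (by positivity)) (le_of_eq ?_)
  unfold K1; ring

lemma main2 {C : ℝ} (hC : 0 < C) {β : ℝ} (hβ : 2 < β) (hβ2 : ∀ n : ℤ, β ≠ 2 * n)
    (A Ahat : E →L[ℝ] F) (hA : ‖A‖ ≤ C) (hAh : ‖Ahat‖ ≤ C) :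
    ‖opPow (adjoint Ahat ∘L Ahat) (β / 2) - opPow (adjoint A ∘L A) (β / 2)‖ ≤
      (K1 C ⌊β/2⌋₊ (β/2 - ⌊β/2⌋₊)
        + ((⌊β/2⌋₊ : ℝ) * (max 1 (C^2))^⌊β/2⌋₊ * (2*C))
            * (|Real.sin ((β/2 - ⌊β/2⌋₊) * Real.pi) / Real.pi|
               * (max 1 (C^2) * ∫ t in Ioi (0:ℝ), gdom (β/2 - ⌊β/2⌋₊) t)))
        * ‖Ahat - A‖ := by
  set m := ⌊β/2⌋₊ with hm
  set s := β/2 - m with hsdef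
  set N := max 1 (C^2) with hNdef
  set Th := adjoint Ahat ∘L Ahat with hThdef
  set T := adjoint A ∘L A with hTdef
  have hN : 1 ≤ N := le_max_left _ _
  have hb1 : (1:ℝ) < β/2 := by linarith
  have hm1 : 1 ≤ m := Nat.le_floor (by push_cast; linarith)
  have hne : β/2 ≠ (m:ℝ) := by
    intro h
    exact hβ2 m (by push_cast at h ⊢; linarith)
  have hfl : (m:ℝ) ≤ β/2 := Nat.floor_le (by linarith)
  have hfl2 : β/2 < m + 1 := Nat.lt_floor_add_one _
  have hs : s ∈ Set.Ioo (0:ℝ) 1 := by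
    constructor
    · have := lt_of_le_of_ne hfl (Ne.symm hne); simp only [hsdef]; linarith
    · simp only [hsdef]; linarith
  have hopTh : opPow Th (β/2) = (Th ^ m) ∘L fracPow Th s := by
    unfold opPow; rw [if_neg hne]
  have hopT : opPow T (β/2) = (T ^ m) ∘L fracPow T s := by
    unfold opPow; rw [if_neg hne]
  rw [hopTh, hopT]
  have hsplit : (Th ^ m) ∘L fracPow Th s - (T ^ m) ∘L fracPow T s
      = (Th ^ m) ∘L (fracPow Th s - fracPow T s) + (Th ^ m - T ^ m) ∘L fracPow T s := by
    rw [ContinuousLinearMap.comp_sub, ContinuousLinearMap.sub_comp]; abel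
  rw [hsplit]
  refine le_trans (norm_add_le _ _) ?_
  have hg0 := integral_gdom_nonneg s
  have hposh := pos_adj_comp Ahat
  have hpos := pos_adj_comp A
  have hThn : ‖Th‖ ≤ N := norm_adj_comp_le hAh hC.le
  have hTn : ‖T‖ ≤ N := norm_adj_comp_le hA hC.le
  have hd := norm_diffT_le hA hAh hC.le
  -- term 1
  have h1 : ‖(Th ^ m) ∘L (fracPow Th s - fracPow T s)‖ ≤ K1 C m s * ‖Ahat - A‖ := by
    refine le_trans (key_integral Th T hposh hpos hN hThn hTn hm1 hs) ?_
    refine le_trans (mul_le_mul_of_nonneg_left hd (by positivity)) (le_of_eq ?_)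
    unfold K1; ring
  -- term 2
  set B := |Real.sin (s * Real.pi) / Real.pi| * (N * ∫ t in Ioi (0:ℝ), gdom s t) with hBdef
  have hB0 : 0 ≤ B :=
    mul_nonneg (abs_nonneg _) (mul_nonneg (by positivity) hg0)
  have h2 : ‖(Th ^ m - T ^ m) ∘L fracPow T s‖
      ≤ ((m : ℝ) * N^m * (2*C)) * B * ‖Ahat - A‖ := by
    refine le_trans (opNorm_comp_le _ _) ?_
    have ha : ‖Th ^ m - T ^ m‖ ≤ (m : ℝ) * N^m * ‖Th - T‖ :=
      pow_sub_pow_norm Th T hN hThn hTn m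
    have hb : ‖fracPow T s‖ ≤ B := norm_fracPow_le T hpos hN hTn hs
    refine le_trans (mul_le_mul ha hb (norm_nonneg _) (by positivity)) ?_
    refine le_trans (mul_le_mul_of_nonneg_right
      (mul_le_mul_of_nonneg_left hd (by positivity)) hB0) (le_of_eq (by ring))
  calc ‖(Th ^ m) ∘L (fracPow Th s - fracPow T s)‖ + ‖(Th ^ m - T ^ m) ∘L fracPow T s‖
      ≤ K1 C m s * ‖Ahat - A‖ + ((m : ℝ) * N^m * (2*C)) * B * ‖Ahat - A‖ := add_le_add h1 h2
  _ = (K1 C m s + ((m : ℝ) * N^m * (2*C)) * B) * ‖Ahat - A‖ := by ring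

end main


/-- Lipschitz estimates on the ball of radius `C`: for every `k ≥ 1` and `s ∈ (0,1)` there is
`C'` (depending only on `s`, `k`, `C`) with
`‖(Â*Â)^k ((Â*Â)^s − (A*A)^s)‖ ≤ C' ‖Â − A‖`; consequently, for every `β > 2` which is not an
even integer there is `C''` (depending only on `β`, `C`) with
`‖(Â*Â)^{β/2} − (A*A)^{β/2}‖ ≤ C'' ‖Â − A‖`. -/
theorem stmt19 (C : ℝ) (hC : 0 < C) :
    (∀ (k : ℕ), 1 ≤ k → ∀ s : ℝ, s ∈ Set.Ioo (0 : ℝ) 1 →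
      ∃ C' : ℝ, ∀ (E : Type u) (F : Type v)
        [NormedAddCommGroup E] [InnerProductSpace ℝ E] [CompleteSpace E]
        [NormedAddCommGroup F] [InnerProductSpace ℝ F] [CompleteSpace F]
        (A Ahat : E →L[ℝ] F), ‖A‖ ≤ C → ‖Ahat‖ ≤ C →
        ‖((adjoint Ahat ∘L Ahat) ^ k) ∘L
            (opPow (adjoint Ahat ∘L Ahat) s - opPow (adjoint A ∘L A) s)‖ ≤
          C' * ‖Ahat - A‖)
    ∧ (∀ β : ℝ, 2 < β → (∀ n : ℤ, β ≠ 2 * n) →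
      ∃ C'' : ℝ, ∀ (E : Type u) (F : Type v)
        [NormedAddCommGroup E] [InnerProductSpace ℝ E] [CompleteSpace E]
        [NormedAddCommGroup F] [InnerProductSpace ℝ F] [CompleteSpace F]
        (A Ahat : E →L[ℝ] F), ‖A‖ ≤ C → ‖Ahat‖ ≤ C →
        ‖opPow (adjoint Ahat ∘L Ahat) (β / 2) - opPow (adjoint A ∘L A) (β / 2)‖ ≤
          C'' * ‖Ahat - A‖) := by
  constructor
  · intro k hk s hs
    exact ⟨K1 C k s, fun E F _ _ _ _ _ _ A Ahat hA hAh => main1 hC hk hs A Ahat hA hAh⟩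
  · intro β hβ hβ2
    exact ⟨K1 C ⌊β/2⌋₊ (β/2 - ⌊β/2⌋₊)
        + ((⌊β/2⌋₊ : ℝ) * (max 1 (C^2))^⌊β/2⌋₊ * (2*C))
            * (|Real.sin ((β/2 - ⌊β/2⌋₊) * Real.pi) / Real.pi|
               * (max 1 (C^2) * ∫ t in Ioi (0:ℝ), gdom (β/2 - ⌊β/2⌋₊) t)),
      fun E F _ _ _ _ _ _ A Ahat hA hAh => main2 hC hβ hβ2 A Ahat hA hAh⟩
end
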